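/- For every nonzero $x\in\mathbb{R}$ and every $s>0$, the Laplace transform in time of the second spatial derivative of the heat kernel satisfies $\int_0^\infty e^{-st}\,\partial_x^2 p(t,x)\,dt=\sqrt{2s}\;e^{-|x|\sqrt{2s}}$. -/

import Mathlib

open MeasureTheory

noncomputable section

/-- The Gaussian heat kernel `p(t,x) = (2πt)^{-1/2} exp(-x²/(2t))`. -/
def heatKer (t x : ℝ) : ℝ :=
  (Real.sqrt (2 * Real.pi * t))⁻¹ * Real.exp (-x ^ 2 / (2 * t))

namespace HeatAux

open Real Set Filter Topology

/-! ### The Gaussian antiderivative -/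

def gaussPrim (u : ℝ) : ℝ := ∫ v in Iic u, Real.exp (-v ^ 2)

lemma integrable_gauss : Integrable (fun v : ℝ => Real.exp (-v ^ 2)) := by
  simpa using integrable_exp_neg_mul_sq (b := (1:ℝ)) one_pos

lemma gaussPrim_eq (u : ℝ) :
    gaussPrim u = gaussPrim 0 + ∫ v in (0:ℝ)..u, Real.exp (-v ^ 2) := by
  have h := intervalIntegral.integral_Iic_sub_Iic (f := fun v : ℝ => Real.exp (-v ^ 2))
    (a := (0:ℝ)) (b := u) integrable_gauss.integrableOn integrable_gauss.integrableOn
  unfold gaussPrim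
  linarith [h]

lemma gaussPrim_hasDerivAt (u : ℝ) : HasDerivAt gaussPrim (Real.exp (-u ^ 2)) u := by
  have hc : Continuous (fun v : ℝ => Real.exp (-v ^ 2)) := by continuity
  have h : HasDerivAt (fun w => ∫ v in (0:ℝ)..w, Real.exp (-v ^ 2)) (Real.exp (-u ^ 2)) u :=
    intervalIntegral.integral_hasDerivAt_right
      integrable_gauss.intervalIntegrable
      (hc.stronglyMeasurableAtFilter _ _)
      hc.continuousAt
  have h2 : gaussPrim = fun w => gaussPrim 0 + ∫ v in (0:ℝ)..w, Real.exp (-v ^ 2) :=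
    funext gaussPrim_eq
  rw [h2]
  exact h.const_add _

lemma gaussPrim_tendsto_atTop : Tendsto gaussPrim atTop (𝓝 (Real.sqrt Real.pi)) := by
  have h1 : Tendsto (fun u : ℝ => ∫ v in (0:ℝ)..u, Real.exp (-v ^ 2)) atTop
      (𝓝 (∫ v in Ioi (0:ℝ), Real.exp (-v ^ 2))) :=
    intervalIntegral_tendsto_integral_Ioi 0 integrable_gauss.integrableOn tendsto_id
  have h2 : gaussPrim 0 + ∫ v in Ioi (0:ℝ), Real.exp (-v ^ 2) = Real.sqrt Real.pi := by
    unfold gaussPrim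
    rw [intervalIntegral.integral_Iic_add_Ioi integrable_gauss.integrableOn
      integrable_gauss.integrableOn]
    simpa using integral_gaussian 1
  have h3 := (tendsto_const_nhds :
    Tendsto (fun _ : ℝ => gaussPrim 0) atTop (𝓝 (gaussPrim 0))).add h1
  rw [h2] at h3
  exact h3.congr (fun u => (gaussPrim_eq u).symm)

lemma gaussPrim_tendsto_atBot : Tendsto gaussPrim atBot (𝓝 0) := by
  have h1 : Tendsto (fun u : ℝ => ∫ v in u..(0:ℝ), Real.exp (-v ^ 2)) atBot
      (𝓝 (gaussPrim 0)) :=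
    intervalIntegral_tendsto_integral_Iic 0 integrable_gauss.integrableOn tendsto_id
  have h2 : ∀ u : ℝ, gaussPrim u = gaussPrim 0 - ∫ v in u..(0:ℝ), Real.exp (-v ^ 2) := by
    intro u
    have h := intervalIntegral.integral_Iic_sub_Iic (f := fun v : ℝ => Real.exp (-v ^ 2))
      (a := u) (b := (0:ℝ)) integrable_gauss.integrableOn integrable_gauss.integrableOn
    unfold gaussPrim
    linarith [h]
  have h3 := (tendsto_const_nhds :
    Tendsto (fun _ : ℝ => gaussPrim 0) atBot (𝓝 (gaussPrim 0))).sub h1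
  rw [sub_self] at h3
  exact h3.congr (fun u => (h2 u).symm)

/-! ### exponential bounds -/

lemma exp_neg_le_inv {z : ℝ} (hz : 0 < z) : Real.exp (-z) ≤ z⁻¹ := by
  rw [Real.exp_neg]
  have h1 : z ≤ Real.exp z := by linarith [Real.add_one_le_exp z]
  exact inv_anti₀ hz h1

lemma exp_neg_le_four_div_sq {z : ℝ} (hz : 0 < z) : Real.exp (-z) ≤ 4 / z ^ 2 := by
  have h1 : z / 2 ≤ Real.exp (z / 2) := by linarith [Real.add_one_le_exp (z / 2)]
  have h2 : z ^ 2 / 4 ≤ Real.exp z := by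
    have := mul_le_mul h1 h1 (by linarith) (Real.exp_pos _).le
    rw [← Real.exp_add] at this
    calc z ^ 2 / 4 = (z / 2) * (z / 2) := by ring
      _ ≤ Real.exp (z / 2 + z / 2) := this
      _ = Real.exp z := by ring_nf
  rw [Real.exp_neg]
  rw [inv_le_iff_one_le_mul₀ (Real.exp_pos _)]
  rw [div_mul_eq_mul_div, le_div_iff₀ (by positivity)]
  nlinarith [Real.exp_pos z]

/-! ### basic facts about the heat kernel -/

lemma heatKer_nonneg (t x : ℝ) : 0 ≤ heatKer t x := by
  unfold heatKer
  positivity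

lemma heatKer_le {t : ℝ} (x : ℝ) (ht : 0 < t) :
    heatKer t x ≤ (Real.sqrt t)⁻¹ * Real.exp (-x ^ 2 / (2 * t)) := by
  unfold heatKer
  have h1 : Real.sqrt t ≤ Real.sqrt (2 * Real.pi * t) := by
    apply Real.sqrt_le_sqrt
    nlinarith [Real.pi_gt_three]
  have h2 : (Real.sqrt (2 * Real.pi * t))⁻¹ ≤ (Real.sqrt t)⁻¹ :=
    inv_anti₀ (Real.sqrt_pos.mpr ht) h1
  exact mul_le_mul_of_nonneg_right h2 (Real.exp_pos _).le

lemma exp_heat_le_one {t : ℝ} (x : ℝ) (ht : 0 < t) : Real.exp (-x ^ 2 / (2 * t)) ≤ 1 := by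
  rw [Real.exp_le_one_iff, neg_div, neg_nonpos]
  positivity

lemma heatKer_le' {t : ℝ} (x : ℝ) (ht : 0 < t) : heatKer t x ≤ (Real.sqrt t)⁻¹ := by
  calc heatKer t x ≤ (Real.sqrt t)⁻¹ * Real.exp (-x ^ 2 / (2 * t)) := heatKer_le x ht
    _ ≤ (Real.sqrt t)⁻¹ * 1 := mul_le_mul_of_nonneg_left (exp_heat_le_one x ht) (by positivity)
    _ = (Real.sqrt t)⁻¹ := mul_one _

/-- time derivative of the heat kernel -/
lemma heatKer_hasDerivAt_time (x : ℝ) {t : ℝ} (ht : 0 < t) :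
    HasDerivAt (fun t => heatKer t x)
      (heatKer t x * (x ^ 2 / (2 * t ^ 2) - 1 / (2 * t))) t := by
  have hin : (0:ℝ) < 2 * Real.pi * t := by positivity
  have hsq : Real.sqrt (2 * Real.pi * t) ≠ 0 := by positivity
  have h1 : HasDerivAt (fun t : ℝ => 2 * Real.pi * t) (2 * Real.pi) t := by
    simpa using (hasDerivAt_id t).const_mul (2 * Real.pi)
  have h2 : HasDerivAt (fun t : ℝ => Real.sqrt (2 * Real.pi * t))
      (1 / (2 * Real.sqrt (2 * Real.pi * t)) * (2 * Real.pi)) t :=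
    (Real.hasDerivAt_sqrt (ne_of_gt hin)).comp t h1
  have h3 : HasDerivAt (fun t : ℝ => (Real.sqrt (2 * Real.pi * t))⁻¹)
      (-(1 / (2 * Real.sqrt (2 * Real.pi * t)) * (2 * Real.pi)) /
        (Real.sqrt (2 * Real.pi * t)) ^ 2) t := h2.inv hsq
  have h4 : HasDerivAt (fun t : ℝ => (2:ℝ) * t) 2 t := by
    simpa using (hasDerivAt_id t).const_mul (2:ℝ)
  have h5 : HasDerivAt (fun t : ℝ => -x ^ 2 / (2 * t))
      ((0 * (2 * t) - (-x ^ 2) * 2) / (2 * t) ^ 2) t :=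
    (hasDerivAt_const t (-x ^ 2)).div h4 (by positivity)
  have h6 := h3.mul h5.exp
  have hfun : (fun t => heatKer t x) =
      fun t : ℝ => (Real.sqrt (2 * Real.pi * t))⁻¹ * Real.exp (-x ^ 2 / (2 * t)) := rfl
  rw [hfun]
  refine h6.congr_deriv ?_
  rw [Real.sq_sqrt hin.le]
  unfold heatKer
  field_simp
  ring_nf

/-- second space derivative of the heat kernel -/
lemma iteratedDeriv_two_heatKer {t : ℝ} (x : ℝ) (ht : 0 < t) :
    iteratedDeriv 2 (fun y => heatKer t y) x = heatKer t x * (x ^ 2 / t ^ 2 - 1 / t) := by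
  have hd1 : ∀ y : ℝ, HasDerivAt (fun y => heatKer t y)
      ((Real.sqrt (2 * Real.pi * t))⁻¹ *
        (Real.exp (-y ^ 2 / (2 * t)) * (-(2 * y) / (2 * t)))) y := by
    intro y
    have hinner : HasDerivAt (fun y : ℝ => -y ^ 2 / (2 * t)) (-(2 * y) / (2 * t)) y := by
      have h : HasDerivAt (fun y : ℝ => -y ^ 2) (-(2 * y)) y := by
        exact (hasDerivAt_pow 2 y).neg.congr_deriv (by simp)
      exact h.div_const (2 * t)
    exact hinner.exp.const_mul _
  have hderiv1 : (deriv fun y => heatKer t y) = fun y =>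
      (Real.sqrt (2 * Real.pi * t))⁻¹ * (Real.exp (-y ^ 2 / (2 * t)) * (-(2 * y) / (2 * t))) :=
    funext fun y => (hd1 y).deriv
  have hinner : HasDerivAt (fun y : ℝ => -y ^ 2 / (2 * t)) (-(2 * x) / (2 * t)) x := by
    have h : HasDerivAt (fun y : ℝ => -y ^ 2) (-(2 * x)) x := by
      exact (hasDerivAt_pow 2 x).neg.congr_deriv (by simp)
    exact h.div_const (2 * t)
  have hlin : HasDerivAt (fun y : ℝ => -(2 * y) / (2 * t)) (-2 / (2 * t)) x := by
    have h : HasDerivAt (fun y : ℝ => -(2 * y)) (-2 : ℝ) x := by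
      exact ((hasDerivAt_id x).const_mul (2:ℝ)).neg.congr_deriv (by simp)
    exact h.div_const (2 * t)
  have hd2 := (hinner.exp.mul hlin).const_mul ((Real.sqrt (2 * Real.pi * t))⁻¹)
  have h2 : iteratedDeriv 2 (fun y => heatKer t y) = deriv (deriv (fun y => heatKer t y)) := by
    rw [show (2:ℕ) = 0 + 1 + 1 from rfl, iteratedDeriv_succ, iteratedDeriv_succ,
      iteratedDeriv_zero]
  rw [h2, hderiv1]; refine hd2.deriv.trans ?_
  unfold heatKer
  field_simp
  ring

/-! ### the antiderivative in time -/

variable (x s : ℝ)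

def XX : ℝ := |x| * Real.sqrt (2 * s)

def phiP (t : ℝ) : ℝ := |x| / Real.sqrt 2 * (Real.sqrt t)⁻¹ + Real.sqrt s * Real.sqrt t

def phiM (t : ℝ) : ℝ := -(|x| / Real.sqrt 2) * (Real.sqrt t)⁻¹ + Real.sqrt s * Real.sqrt t

def FF (t : ℝ) : ℝ :=
  (Real.exp (XX x s) * gaussPrim (phiP x s t) + Real.exp (-XX x s) * gaussPrim (phiM x s t)) /
    (Real.sqrt s * Real.sqrt (2 * Real.pi))

def GG (t : ℝ) : ℝ :=
  if t ≤ 0 then Real.sqrt (2 * s) * Real.exp (XX x s)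
  else 2 * Real.exp (-s * t) * heatKer t x + 2 * s * FF x s t

variable {x s}

lemma cross_term {t : ℝ} (ht : 0 < t) :
    2 * (|x| / Real.sqrt 2 * (Real.sqrt t)⁻¹) * (Real.sqrt s * Real.sqrt t) = XX x s := by
  have htne : Real.sqrt t ≠ 0 := by positivity
  have h2ne : Real.sqrt 2 ≠ 0 := by positivity
  have h22 : Real.sqrt 2 * Real.sqrt 2 = 2 := Real.mul_self_sqrt (by norm_num)
  have h2s : Real.sqrt (2 * s) = Real.sqrt 2 * Real.sqrt s := Real.sqrt_mul (by norm_num) s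
  have hdiv : (2:ℝ) / Real.sqrt 2 = Real.sqrt 2 := by
    rw [div_eq_iff h2ne]; exact h22.symm
  rw [XX, h2s]
  calc 2 * (|x| / Real.sqrt 2 * (Real.sqrt t)⁻¹) * (Real.sqrt s * Real.sqrt t)
      = 2 / Real.sqrt 2 * |x| * Real.sqrt s * ((Real.sqrt t)⁻¹ * Real.sqrt t) := by ring
    _ = 2 / Real.sqrt 2 * |x| * Real.sqrt s := by rw [inv_mul_cancel₀ htne, mul_one]
    _ = Real.sqrt 2 * |x| * Real.sqrt s := by rw [hdiv]
    _ = |x| * (Real.sqrt 2 * Real.sqrt s) := by ring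

lemma sq_phiP (hs : 0 ≤ s) {t : ℝ} (ht : 0 < t) :
    phiP x s t ^ 2 = x ^ 2 / (2 * t) + XX x s + s * t := by
  have hA : (|x| / Real.sqrt 2 * (Real.sqrt t)⁻¹) ^ 2 = x ^ 2 / (2 * t) := by
    rw [mul_pow, div_pow, inv_pow, Real.sq_sqrt ht.le,
      Real.sq_sqrt (by norm_num : (0:ℝ) ≤ 2), sq_abs]
    ring
  have hC : (Real.sqrt s * Real.sqrt t) ^ 2 = s * t := by
    rw [mul_pow, Real.sq_sqrt hs, Real.sq_sqrt ht.le]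
  have h1 : phiP x s t = |x| / Real.sqrt 2 * (Real.sqrt t)⁻¹ + Real.sqrt s * Real.sqrt t := rfl
  rw [h1, add_sq, hA, cross_term ht, hC]

lemma sq_phiM (hs : 0 ≤ s) {t : ℝ} (ht : 0 < t) :
    phiM x s t ^ 2 = x ^ 2 / (2 * t) - XX x s + s * t := by
  have hA : (-(|x| / Real.sqrt 2) * (Real.sqrt t)⁻¹) ^ 2 = x ^ 2 / (2 * t) := by
    rw [neg_mul, neg_pow, mul_pow, div_pow, inv_pow, Real.sq_sqrt ht.le,
      Real.sq_sqrt (by norm_num : (0:ℝ) ≤ 2), sq_abs]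
    ring
  have hB : 2 * (-(|x| / Real.sqrt 2) * (Real.sqrt t)⁻¹) * (Real.sqrt s * Real.sqrt t)
      = -XX x s := by
    linear_combination -(cross_term (x := x) (s := s) ht)
  have hC : (Real.sqrt s * Real.sqrt t) ^ 2 = s * t := by
    rw [mul_pow, Real.sq_sqrt hs, Real.sq_sqrt ht.le]
  have h1 : phiM x s t = -(|x| / Real.sqrt 2) * (Real.sqrt t)⁻¹ + Real.sqrt s * Real.sqrt t := rfl
  rw [h1, add_sq, hA, hB, hC]
  ring

lemma FF_hasDerivAt (hs : 0 < s) {t : ℝ} (ht : 0 < t) :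
    HasDerivAt (FF x s) (Real.exp (-s * t) * heatKer t x) t := by
  have htne : Real.sqrt t ≠ 0 := by positivity
  have hsqt : HasDerivAt Real.sqrt (1 / (2 * Real.sqrt t)) t := Real.hasDerivAt_sqrt ht.ne'
  have hinv : HasDerivAt (fun t : ℝ => (Real.sqrt t)⁻¹)
      (-(1 / (2 * Real.sqrt t)) / Real.sqrt t ^ 2) t := hsqt.inv htne
  have hP : HasDerivAt (phiP x s)
      (|x| / Real.sqrt 2 * (-(1 / (2 * Real.sqrt t)) / Real.sqrt t ^ 2) +
        Real.sqrt s * (1 / (2 * Real.sqrt t))) t :=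
    (hinv.const_mul _).add (hsqt.const_mul _)
  have hM : HasDerivAt (phiM x s)
      (-(|x| / Real.sqrt 2) * (-(1 / (2 * Real.sqrt t)) / Real.sqrt t ^ 2) +
        Real.sqrt s * (1 / (2 * Real.sqrt t))) t :=
    (hinv.const_mul _).add (hsqt.const_mul _)
  have hGP := ((gaussPrim_hasDerivAt (phiP x s t)).comp t hP).const_mul (Real.exp (XX x s))
  have hGM := ((gaussPrim_hasDerivAt (phiM x s t)).comp t hM).const_mul (Real.exp (-XX x s))
  have hFF := (hGP.add hGM).div_const (Real.sqrt s * Real.sqrt (2 * Real.pi))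
  refine hFF.congr_deriv ?_
  have eP : Real.exp (-phiP x s t ^ 2) =
      Real.exp (-XX x s) * (Real.exp (-s * t) * Real.exp (-x ^ 2 / (2 * t))) := by
    rw [← Real.exp_add, ← Real.exp_add]
    congr 1
    rw [sq_phiP hs.le ht]
    ring
  have eM : Real.exp (-phiM x s t ^ 2) =
      Real.exp (XX x s) * (Real.exp (-s * t) * Real.exp (-x ^ 2 / (2 * t))) := by
    rw [← Real.exp_add, ← Real.exp_add]
    congr 1
    rw [sq_phiM hs.le ht]
    ring
  rw [eP, eM, Real.exp_neg (XX x s)]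
  have hker : Real.sqrt (2 * Real.pi * t) = Real.sqrt (2 * Real.pi) * Real.sqrt t :=
    Real.sqrt_mul (by positivity) t
  unfold heatKer
  rw [hker, Real.sq_sqrt ht.le]
  have hXne : Real.exp (XX x s) ≠ 0 := Real.exp_ne_zero _
  have hsne : Real.sqrt s ≠ 0 := by positivity
  have hpine : Real.sqrt (2 * Real.pi) ≠ 0 := by positivity
  field_simp
  ring

lemma GG_hasDerivAt (hs : 0 < s) {t : ℝ} (ht : 0 < t) :
    HasDerivAt (GG x s) (Real.exp (-s * t) * (heatKer t x * (x ^ 2 / t ^ 2 - 1 / t))) t := by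
  have hexp : HasDerivAt (fun t : ℝ => Real.exp (-s * t)) (Real.exp (-s * t) * (-s)) t := by
    have h : HasDerivAt (fun t : ℝ => -s * t) (-s) t := by
      simpa using (hasDerivAt_id t).const_mul (-s)
    exact h.exp
  have hker := heatKer_hasDerivAt_time x ht
  have h1 := ((hexp.mul hker).const_mul 2).add ((FF_hasDerivAt (x := x) hs ht).const_mul (2 * s))
  have h2 : HasDerivAt (GG x s)
      (2 * (Real.exp (-s * t) * (-s) * heatKer t x +
        Real.exp (-s * t) * (heatKer t x * (x ^ 2 / (2 * t ^ 2) - 1 / (2 * t)))) +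
        2 * s * (Real.exp (-s * t) * heatKer t x)) t := by
    apply h1.congr_of_eventuallyEq
    filter_upwards [Ioi_mem_nhds ht] with y hy
    simp only [GG, not_le.mpr (Set.mem_Ioi.mp hy), if_false, Pi.add_apply, Pi.mul_apply]
    ring
  convert h2 using 1
  field_simp
  ring

lemma integrand_bound (hx : x ≠ 0) (hs : 0 < s) {t : ℝ} (ht : 0 < t) :
    |Real.exp (-s * t) * (heatKer t x * (x ^ 2 / t ^ 2 - 1 / t))| ≤
      18 / x ^ 2 * ((Real.sqrt t)⁻¹ * Real.exp (-s * t)) := by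
  have hx2 : 0 < x ^ 2 := by positivity
  have hz : 0 < x ^ 2 / (2 * t) := by positivity
  have hE1 : Real.exp (-x ^ 2 / (2 * t)) ≤ (x ^ 2 / (2 * t))⁻¹ := by
    rw [neg_div]; exact exp_neg_le_inv hz
  have hE2 : Real.exp (-x ^ 2 / (2 * t)) ≤ 4 / (x ^ 2 / (2 * t)) ^ 2 := by
    rw [neg_div]; exact exp_neg_le_four_div_sq hz
  have hK := heatKer_le x ht
  have hKnn := heatKer_nonneg t x
  have htinv : (0:ℝ) < (Real.sqrt t)⁻¹ := by positivity
  have hEnn : (0:ℝ) ≤ Real.exp (-x ^ 2 / (2 * t)) := (Real.exp_pos _).le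
  have e2' : Real.exp (-x ^ 2 / (2 * t)) * (x ^ 2 / t ^ 2) ≤ 16 / x ^ 2 := by
    calc Real.exp (-x ^ 2 / (2 * t)) * (x ^ 2 / t ^ 2)
        ≤ 4 / (x ^ 2 / (2 * t)) ^ 2 * (x ^ 2 / t ^ 2) :=
          mul_le_mul_of_nonneg_right hE2 (by positivity)
      _ = 16 / x ^ 2 := by field_simp; ring
  have e1' : Real.exp (-x ^ 2 / (2 * t)) * (1 / t) ≤ 2 / x ^ 2 := by
    calc Real.exp (-x ^ 2 / (2 * t)) * (1 / t)
        ≤ (x ^ 2 / (2 * t))⁻¹ * (1 / t) := mul_le_mul_of_nonneg_right hE1 (by positivity)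
      _ = 2 / x ^ 2 := by field_simp
  have habs : |x ^ 2 / t ^ 2 - 1 / t| ≤ x ^ 2 / t ^ 2 + 1 / t := by
    have h1 : (0:ℝ) ≤ x ^ 2 / t ^ 2 := by positivity
    have h2 : (0:ℝ) ≤ 1 / t := by positivity
    rw [abs_sub_le_iff]
    constructor <;> linarith
  have key : heatKer t x * |x ^ 2 / t ^ 2 - 1 / t| ≤ 18 / x ^ 2 * (Real.sqrt t)⁻¹ := by
    calc heatKer t x * |x ^ 2 / t ^ 2 - 1 / t|
        ≤ ((Real.sqrt t)⁻¹ * Real.exp (-x ^ 2 / (2 * t))) * (x ^ 2 / t ^ 2 + 1 / t) :=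
          mul_le_mul hK habs (abs_nonneg _) (by positivity)
      _ = (Real.sqrt t)⁻¹ * (Real.exp (-x ^ 2 / (2 * t)) * (x ^ 2 / t ^ 2) +
            Real.exp (-x ^ 2 / (2 * t)) * (1 / t)) := by ring
      _ ≤ (Real.sqrt t)⁻¹ * (16 / x ^ 2 + 2 / x ^ 2) :=
          mul_le_mul_of_nonneg_left (add_le_add e2' e1') htinv.le
      _ = 18 / x ^ 2 * (Real.sqrt t)⁻¹ := by ring
  calc |Real.exp (-s * t) * (heatKer t x * (x ^ 2 / t ^ 2 - 1 / t))|
      = Real.exp (-s * t) * (heatKer t x * |x ^ 2 / t ^ 2 - 1 / t|) := by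
        rw [abs_mul, abs_of_pos (Real.exp_pos _), abs_mul, abs_of_nonneg hKnn]
    _ ≤ Real.exp (-s * t) * (18 / x ^ 2 * (Real.sqrt t)⁻¹) :=
        mul_le_mul_of_nonneg_left key (Real.exp_pos _).le
    _ = 18 / x ^ 2 * ((Real.sqrt t)⁻¹ * Real.exp (-s * t)) := by ring

lemma continuousOn_integrand :
    ContinuousOn (fun t : ℝ => Real.exp (-s * t) * (heatKer t x * (x ^ 2 / t ^ 2 - 1 / t)))
      (Ioi (0:ℝ)) := by
  apply ContinuousOn.mul
  · exact (Real.continuous_exp.comp (continuous_const.mul continuous_id)).continuousOn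
  apply ContinuousOn.mul
  · unfold heatKer
    apply ContinuousOn.mul
    · apply ContinuousOn.inv₀
      · exact (Real.continuous_sqrt.comp (continuous_const.mul continuous_id)).continuousOn
      · intro t ht
        have h : (0:ℝ) < t := ht
        have : (0:ℝ) < 2 * Real.pi * t := by positivity
        positivity
    · apply Real.continuous_exp.comp_continuousOn
      apply ContinuousOn.div continuousOn_const (continuous_const.mul continuous_id).continuousOn
      intro t ht
      have h : (0:ℝ) < t := ht
      exact mul_ne_zero two_ne_zero h.ne'
  · apply ContinuousOn.sub
    · apply ContinuousOn.div continuousOn_const (continuous_pow 2).continuousOn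
      intro t ht
      have h : (0:ℝ) < t := ht
      positivity
    · apply ContinuousOn.div continuousOn_const continuous_id.continuousOn
      intro t ht
      exact (show (0:ℝ) < t from ht).ne'

lemma integrableOn_integrand (hx : x ≠ 0) (hs : 0 < s) :
    IntegrableOn (fun t : ℝ => Real.exp (-s * t) * (heatKer t x * (x ^ 2 / t ^ 2 - 1 / t)))
      (Ioi (0:ℝ)) := by
  have hmeas : AEStronglyMeasurable
      (fun t : ℝ => Real.exp (-s * t) * (heatKer t x * (x ^ 2 / t ^ 2 - 1 / t)))
      (volume.restrict (Ioi (0:ℝ))) :=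
    (continuousOn_integrand (x := x) (s := s)).aestronglyMeasurable measurableSet_Ioi
  rw [← Ioc_union_Ioi_eq_Ioi (zero_le_one' ℝ)]
  apply IntegrableOn.union
  · have h0 : IntegrableOn (fun t : ℝ => t ^ (-(1/2) : ℝ)) (Ioc (0:ℝ) 1) :=
      (intervalIntegrable_iff_integrableOn_Ioc_of_le zero_le_one).mp
        (intervalIntegral.intervalIntegrable_rpow' (by norm_num))
    have h1 : IntegrableOn (fun t : ℝ => 18 / x ^ 2 * t ^ (-(1/2) : ℝ)) (Ioc (0:ℝ) 1) :=
      h0.const_mul _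
    have hrint : IntegrableOn (fun t : ℝ => 18 / x ^ 2 * (Real.sqrt t)⁻¹) (Ioc (0:ℝ) 1) := by
      apply h1.congr_fun ?_ measurableSet_Ioc
      intro t ht
      show 18 / x ^ 2 * t ^ (-(1/2) : ℝ) = 18 / x ^ 2 * (Real.sqrt t)⁻¹
      rw [Real.sqrt_eq_rpow, ← Real.rpow_neg ht.1.le]
    apply Integrable.mono' hrint (hmeas.mono_set Ioc_subset_Ioi_self)
    rw [ae_restrict_iff' measurableSet_Ioc]
    filter_upwards with t ht
    have he : Real.exp (-s * t) ≤ 1 := by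
      rw [Real.exp_le_one_iff, neg_mul, neg_nonpos]
      exact mul_nonneg hs.le ht.1.le
    calc ‖Real.exp (-s * t) * (heatKer t x * (x ^ 2 / t ^ 2 - 1 / t))‖
        = |Real.exp (-s * t) * (heatKer t x * (x ^ 2 / t ^ 2 - 1 / t))| := rfl
      _ ≤ 18 / x ^ 2 * ((Real.sqrt t)⁻¹ * Real.exp (-s * t)) := integrand_bound hx hs ht.1
      _ ≤ 18 / x ^ 2 * ((Real.sqrt t)⁻¹ * 1) := by
          apply mul_le_mul_of_nonneg_left _ (by positivity)
          exact mul_le_mul_of_nonneg_left he (by positivity)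
      _ = 18 / x ^ 2 * (Real.sqrt t)⁻¹ := by rw [mul_one]
  · have hrint : IntegrableOn (fun t : ℝ => 18 / x ^ 2 * Real.exp (-s * t)) (Ioi (1:ℝ)) :=
      (exp_neg_integrableOn_Ioi 1 hs).const_mul _
    apply Integrable.mono' hrint (hmeas.mono_set (Ioi_subset_Ioi zero_le_one))
    rw [ae_restrict_iff' measurableSet_Ioi]
    filter_upwards with t ht
    have ht0 : (0:ℝ) < t := lt_trans zero_lt_one ht
    have hsle : (1:ℝ) ≤ Real.sqrt t := by
      rw [show (1:ℝ) = Real.sqrt 1 by simp]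
      exact Real.sqrt_le_sqrt (le_of_lt ht)
    have hinvle : (Real.sqrt t)⁻¹ ≤ 1 := inv_le_one_of_one_le₀ hsle
    calc ‖Real.exp (-s * t) * (heatKer t x * (x ^ 2 / t ^ 2 - 1 / t))‖
        = |Real.exp (-s * t) * (heatKer t x * (x ^ 2 / t ^ 2 - 1 / t))| := rfl
      _ ≤ 18 / x ^ 2 * ((Real.sqrt t)⁻¹ * Real.exp (-s * t)) := integrand_bound hx hs ht0
      _ ≤ 18 / x ^ 2 * (1 * Real.exp (-s * t)) := by
          apply mul_le_mul_of_nonneg_left _ (by positivity)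
          exact mul_le_mul_of_nonneg_right hinvle (Real.exp_pos _).le
      _ = 18 / x ^ 2 * Real.exp (-s * t) := by rw [one_mul]

lemma const_identity (hs : 0 < s) (A : ℝ) :
    2 * s * (A * Real.sqrt Real.pi / (Real.sqrt s * Real.sqrt (2 * Real.pi)))
      = Real.sqrt (2 * s) * A := by
  have hss : Real.sqrt s * Real.sqrt s = s := Real.mul_self_sqrt hs.le
  have h22 : Real.sqrt 2 * Real.sqrt 2 = 2 := Real.mul_self_sqrt (by norm_num)
  have hpi : Real.sqrt (2 * Real.pi) = Real.sqrt 2 * Real.sqrt Real.pi :=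
    Real.sqrt_mul (by norm_num) _
  have h2s : Real.sqrt (2 * s) = Real.sqrt 2 * Real.sqrt s := Real.sqrt_mul (by norm_num) s
  have hπ : (0:ℝ) < Real.sqrt Real.pi := Real.sqrt_pos.mpr Real.pi_pos
  have hsp : (0:ℝ) < Real.sqrt s := Real.sqrt_pos.mpr hs
  have h2p : (0:ℝ) < Real.sqrt 2 := by positivity
  rw [hpi, h2s, mul_div_assoc']
  rw [div_eq_iff (by positivity)]
  have : Real.sqrt 2 * Real.sqrt s * A * (Real.sqrt s * (Real.sqrt 2 * Real.sqrt Real.pi))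
      = (Real.sqrt 2 * Real.sqrt 2) * (Real.sqrt s * Real.sqrt s) * (A * Real.sqrt Real.pi) := by
    ring
  rw [this, h22, hss]

/-- `t^2 * (sqrt t)⁻¹ = t * sqrt t` -/
lemma sq_mul_inv_sqrt (t : ℝ) : t ^ 2 * (Real.sqrt t)⁻¹ = t * Real.sqrt t := by
  rw [sq, mul_assoc, ← div_eq_mul_inv, Real.div_sqrt]

lemma heatKer_tendsto_zero (hx : x ≠ 0) :
    Tendsto (fun t => heatKer t x) (𝓝[>] (0:ℝ)) (𝓝 0) := by
  have hub : ∀ t ∈ Ioi (0:ℝ), heatKer t x ≤ 16 / x ^ 4 * (t * Real.sqrt t) := by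
    intro t ht
    have ht' : (0:ℝ) < t := ht
    have hz : 0 < x ^ 2 / (2 * t) := by positivity
    have hE2 : Real.exp (-x ^ 2 / (2 * t)) ≤ 4 / (x ^ 2 / (2 * t)) ^ 2 := by
      rw [neg_div]; exact exp_neg_le_four_div_sq hz
    have h4 : 4 / (x ^ 2 / (2 * t)) ^ 2 = 16 * t ^ 2 / x ^ 4 := by
      field_simp
      ring
    calc heatKer t x ≤ (Real.sqrt t)⁻¹ * Real.exp (-x ^ 2 / (2 * t)) := heatKer_le x ht'
      _ ≤ (Real.sqrt t)⁻¹ * (4 / (x ^ 2 / (2 * t)) ^ 2) :=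
          mul_le_mul_of_nonneg_left hE2 (by positivity)
      _ = (Real.sqrt t)⁻¹ * (16 * t ^ 2 / x ^ 4) := by rw [h4]
      _ = 16 / x ^ 4 * (t ^ 2 * (Real.sqrt t)⁻¹) := by ring
      _ = 16 / x ^ 4 * (t * Real.sqrt t) := by rw [sq_mul_inv_sqrt]
  have hg : Tendsto (fun t : ℝ => 16 / x ^ 4 * (t * Real.sqrt t)) (𝓝[>] (0:ℝ)) (𝓝 0) := by
    have hc : Continuous (fun t : ℝ => 16 / x ^ 4 * (t * Real.sqrt t)) :=
      continuous_const.mul (continuous_id.mul Real.continuous_sqrt)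
    have := (hc.tendsto 0).mono_left (nhdsWithin_le_nhds (s := Ioi (0:ℝ)))
    simpa using this
  apply squeeze_zero'
  · filter_upwards [self_mem_nhdsWithin] with t ht
    exact heatKer_nonneg t x
  · filter_upwards [self_mem_nhdsWithin] with t ht
    exact hub t ht
  · exact hg

lemma sqrt_tendsto_atTop : Tendsto Real.sqrt atTop atTop := by
  rw [Filter.tendsto_atTop_atTop]
  intro b
  refine ⟨(max b 0) ^ 2, fun a ha => ?_⟩
  calc b ≤ max b 0 := le_max_left _ _
    _ = Real.sqrt ((max b 0) ^ 2) := (Real.sqrt_sq (le_max_right _ _)).symm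
    _ ≤ Real.sqrt a := Real.sqrt_le_sqrt ha

end HeatAux

open HeatAux Real Set Filter Topology in
/-- Laplace transform (in time) of the second spatial derivative of the heat kernel. -/
theorem laplace_transform_heat_kernel_second_deriv (x : ℝ) (hx : x ≠ 0) (s : ℝ) (hs : 0 < s) :
    ∫ t in Set.Ioi (0:ℝ), Real.exp (-s * t) * iteratedDeriv 2 (fun y => heatKer t y) x =
      Real.sqrt (2 * s) * Real.exp (-|x| * Real.sqrt (2 * s)) := by
  have hrw : Set.EqOn (fun t => Real.exp (-s * t) * iteratedDeriv 2 (fun y => heatKer t y) x)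
      (fun t => Real.exp (-s * t) * (heatKer t x * (x ^ 2 / t ^ 2 - 1 / t))) (Set.Ioi 0) := by
    intro t ht
    simp only
    rw [iteratedDeriv_two_heatKer x (Set.mem_Ioi.mp ht)]
  rw [MeasureTheory.setIntegral_congr_fun measurableSet_Ioi hrw]
  have hb : (0:ℝ) < Real.sqrt s := Real.sqrt_pos.mpr hs
  have hc : (0:ℝ) < |x| / Real.sqrt 2 := by positivity
  -- limits of the building blocks at +∞
  have hsqP_top : Tendsto (phiP x s) atTop atTop := by
    apply Filter.Tendsto.add_atTop (C := 0)
    · have h1 : Tendsto (fun t : ℝ => (Real.sqrt t)⁻¹) atTop (𝓝 0) :=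
        tendsto_inv_atTop_zero.comp sqrt_tendsto_atTop
      have := h1.const_mul (|x| / Real.sqrt 2)
      simpa using this
    · exact sqrt_tendsto_atTop.const_mul_atTop hb
  have hsqM_top : Tendsto (phiM x s) atTop atTop := by
    apply Filter.Tendsto.add_atTop (C := 0)
    · have h1 : Tendsto (fun t : ℝ => (Real.sqrt t)⁻¹) atTop (𝓝 0) :=
        tendsto_inv_atTop_zero.comp sqrt_tendsto_atTop
      have := h1.const_mul (-(|x| / Real.sqrt 2))
      simpa using this
    · exact sqrt_tendsto_atTop.const_mul_atTop hb
  -- limits of the building blocks at 0⁺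
  have hsq0 : Tendsto Real.sqrt (𝓝[>] (0:ℝ)) (𝓝[>] (0:ℝ)) := by
    rw [tendsto_nhdsWithin_iff]
    constructor
    · have := (Real.continuous_sqrt.tendsto 0).mono_left (nhdsWithin_le_nhds (s := Ioi (0:ℝ)))
      simpa using this
    · filter_upwards [self_mem_nhdsWithin] with t ht
      exact Real.sqrt_pos.mpr ht
  have hsqnhds : Tendsto Real.sqrt (𝓝[>] (0:ℝ)) (𝓝 0) := by
    have := (Real.continuous_sqrt.tendsto 0).mono_left (nhdsWithin_le_nhds (s := Ioi (0:ℝ)))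
    simpa using this
  have hinvtop : Tendsto (fun t : ℝ => (Real.sqrt t)⁻¹) (𝓝[>] (0:ℝ)) atTop :=
    tendsto_inv_nhdsGT_zero.comp hsq0
  have hsqP_zero : Tendsto (phiP x s) (𝓝[>] (0:ℝ)) atTop := by
    apply Filter.Tendsto.atTop_add (C := 0)
    · exact hinvtop.const_mul_atTop hc
    · have := hsqnhds.const_mul (Real.sqrt s)
      simpa using this
  have hsqM_zero : Tendsto (phiM x s) (𝓝[>] (0:ℝ)) atBot := by
    apply Filter.Tendsto.atBot_add (C := 0)
    · exact hinvtop.const_mul_atTop_of_neg (by linarith)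
    · have := hsqnhds.const_mul (Real.sqrt s)
      simpa using this
  -- limit of FF at +∞ and 0⁺
  have hFF_top : Tendsto (FF x s) atTop
      (𝓝 ((Real.exp (XX x s) * Real.sqrt Real.pi + Real.exp (-XX x s) * Real.sqrt Real.pi) /
        (Real.sqrt s * Real.sqrt (2 * Real.pi)))) := by
    apply Tendsto.div_const
    exact ((gaussPrim_tendsto_atTop.comp hsqP_top).const_mul _).add
      ((gaussPrim_tendsto_atTop.comp hsqM_top).const_mul _)
  have hFF_zero : Tendsto (FF x s) (𝓝[>] (0:ℝ))
      (𝓝 ((Real.exp (XX x s) * Real.sqrt Real.pi + Real.exp (-XX x s) * 0) /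
        (Real.sqrt s * Real.sqrt (2 * Real.pi)))) := by
    apply Tendsto.div_const
    exact ((gaussPrim_tendsto_atTop.comp hsqP_zero).const_mul _).add
      ((gaussPrim_tendsto_atBot.comp hsqM_zero).const_mul _)
  -- limit of the kernel part
  have hkerpart_top : Tendsto (fun t : ℝ => 2 * Real.exp (-s * t) * heatKer t x) atTop (𝓝 0) := by
    have hg : Tendsto (fun t : ℝ => 2 * Real.exp (-s * t)) atTop (𝓝 0) := by
      have h1 : Tendsto (fun t : ℝ => -s * t) atTop atBot := by
        have := (tendsto_id : Tendsto (fun t : ℝ => t) atTop atTop).const_mul_atTop_of_neg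
          (show -s < 0 by linarith)
        simpa using this
      have := (Real.tendsto_exp_atBot.comp h1).const_mul 2
      simpa using this
    apply squeeze_zero'
    · filter_upwards [Ioi_mem_atTop (0:ℝ)] with t ht
      have := heatKer_nonneg t x
      positivity
    · filter_upwards [Ioi_mem_atTop (1:ℝ)] with t ht
      have ht0 : (0:ℝ) < t := lt_trans zero_lt_one ht
      have hsle : (1:ℝ) ≤ Real.sqrt t := by
        rw [show (1:ℝ) = Real.sqrt 1 by simp]
        exact Real.sqrt_le_sqrt (le_of_lt ht)
      have hKle : heatKer t x ≤ 1 := le_trans (heatKer_le' x ht0) (inv_le_one_of_one_le₀ hsle)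
      calc 2 * Real.exp (-s * t) * heatKer t x ≤ 2 * Real.exp (-s * t) * 1 := by
            apply mul_le_mul_of_nonneg_left hKle (by positivity)
        _ = 2 * Real.exp (-s * t) := mul_one _
    · exact hg
  have hkerpart_zero : Tendsto (fun t : ℝ => 2 * Real.exp (-s * t) * heatKer t x)
      (𝓝[>] (0:ℝ)) (𝓝 0) := by
    have hg : Tendsto (fun t : ℝ => 2 * Real.exp (-s * t)) (𝓝[>] (0:ℝ))
        (𝓝 (2 * Real.exp (-s * 0))) := by
      have hc : Continuous (fun t : ℝ => 2 * Real.exp (-s * t)) := by continuity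
      exact (hc.tendsto 0).mono_left nhdsWithin_le_nhds
    have := hg.mul (heatKer_tendsto_zero hx)
    simpa using this
  -- limits of GG
  have hGG_top : Tendsto (GG x s) atTop
      (𝓝 (Real.sqrt (2 * s) * (Real.exp (XX x s) + Real.exp (-XX x s)))) := by
    have h1 := hkerpart_top.add (hFF_top.const_mul (2 * s))
    rw [zero_add] at h1
    have h2 : 2 * s * ((Real.exp (XX x s) * Real.sqrt Real.pi +
        Real.exp (-XX x s) * Real.sqrt Real.pi) / (Real.sqrt s * Real.sqrt (2 * Real.pi)))
        = Real.sqrt (2 * s) * (Real.exp (XX x s) + Real.exp (-XX x s)) := by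
      have := const_identity hs (Real.exp (XX x s) + Real.exp (-XX x s))
      calc 2 * s * ((Real.exp (XX x s) * Real.sqrt Real.pi +
            Real.exp (-XX x s) * Real.sqrt Real.pi) / (Real.sqrt s * Real.sqrt (2 * Real.pi)))
          = 2 * s * ((Real.exp (XX x s) + Real.exp (-XX x s)) * Real.sqrt Real.pi /
            (Real.sqrt s * Real.sqrt (2 * Real.pi))) := by ring_nf
        _ = Real.sqrt (2 * s) * (Real.exp (XX x s) + Real.exp (-XX x s)) := this
    rw [h2] at h1
    apply h1.congr'
    filter_upwards [Ioi_mem_atTop (0:ℝ)] with t ht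
    simp only [GG, not_le.mpr (Set.mem_Ioi.mp ht), if_false]
  have hGG_zero_val : GG x s 0 = Real.sqrt (2 * s) * Real.exp (XX x s) := by
    simp [GG]
  have hGG_zero : ContinuousWithinAt (GG x s) (Ici (0:ℝ)) 0 := by
    have hCW1 : ContinuousWithinAt (GG x s) (Iic (0:ℝ)) 0 := by
      apply (continuousWithinAt_const
        (b := Real.sqrt (2 * s) * Real.exp (XX x s))).congr
      · intro y hy
        simp [GG, (Set.mem_Iic.mp hy)]
      · simp [GG]
    have hCW2 : ContinuousWithinAt (GG x s) (Ioi (0:ℝ)) 0 := by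
      have h1 := hkerpart_zero.add (hFF_zero.const_mul (2 * s))
      rw [zero_add] at h1
      have h2 : 2 * s * ((Real.exp (XX x s) * Real.sqrt Real.pi + Real.exp (-XX x s) * 0) /
          (Real.sqrt s * Real.sqrt (2 * Real.pi)))
          = Real.sqrt (2 * s) * Real.exp (XX x s) := by
        have := const_identity hs (Real.exp (XX x s))
        calc 2 * s * ((Real.exp (XX x s) * Real.sqrt Real.pi + Real.exp (-XX x s) * 0) /
            (Real.sqrt s * Real.sqrt (2 * Real.pi)))
            = 2 * s * (Real.exp (XX x s) * Real.sqrt Real.pi /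
              (Real.sqrt s * Real.sqrt (2 * Real.pi))) := by ring_nf
          _ = Real.sqrt (2 * s) * Real.exp (XX x s) := this
      rw [h2] at h1
      have h3 : Tendsto (GG x s) (𝓝[>] (0:ℝ)) (𝓝 (Real.sqrt (2 * s) * Real.exp (XX x s))) := by
        apply h1.congr'
        filter_upwards [self_mem_nhdsWithin] with t ht
        simp only [GG, not_le.mpr (Set.mem_Ioi.mp ht), if_false]
      have : Tendsto (GG x s) (𝓝[>] (0:ℝ)) (𝓝 (GG x s 0)) := by
        rw [hGG_zero_val]; exact h3
      exact this
    have := hCW1.union hCW2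
    apply this.mono
    intro y _
    rcases le_or_gt y 0 with h | h
    · exact Or.inl h
    · exact Or.inr h
  -- apply FTC
  have hderiv : ∀ t ∈ Ioi (0:ℝ), HasDerivAt (GG x s)
      (Real.exp (-s * t) * (heatKer t x * (x ^ 2 / t ^ 2 - 1 / t))) t :=
    fun t ht => GG_hasDerivAt hs (Set.mem_Ioi.mp ht)
  have key := MeasureTheory.integral_Ioi_of_hasDerivAt_of_tendsto hGG_zero hderiv
    (integrableOn_integrand hx hs) hGG_top
  rw [key, hGG_zero_val]
  rw [show -|x| * Real.sqrt (2 * s) = -XX x s by rw [XX]; ring]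
  ring
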